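/- Being nilpotent of class at most c is a profinite property: if Γ₁ and Γ₂ are residually finite groups with isomorphic profinite completions (as topological groups), then Γ₁ is nilpotent of class ≤ c if and only if Γ₂ is nilpotent of class ≤ c. -/

import Mathlib

/-- The index set for the profinite completion: finite-index normal subgroups. -/
structure FinIndexNormal (Γ : Type*) [Group Γ] where
  N : Subgroup Γ
  normal : N.Normal
  finiteIndex : N.FiniteIndex

attribute [instance] FinIndexNormal.normal FinIndexNormal.finiteIndex

variable (Γ : Type*) [Group Γ]

instance (K : FinIndexNormal Γ) : TopologicalSpace (Γ ⧸ K.N) := ⊥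
instance (K : FinIndexNormal Γ) : DiscreteTopology (Γ ⧸ K.N) := ⟨rfl⟩
instance (K : FinIndexNormal Γ) : IsTopologicalGroup (Γ ⧸ K.N) where
  continuous_mul := continuous_of_discreteTopology
  continuous_inv := continuous_of_discreteTopology

/-- The profinite completion of `Γ`, as the subgroup of compatible families in the
product of all finite quotients of `Γ`. -/
def profiniteCompletionSubgroup : Subgroup (Π K : FinIndexNormal Γ, Γ ⧸ K.N) where
  carrier := {x | ∀ (K L : FinIndexNormal Γ) (h : K.N ≤ L.N),
    QuotientGroup.map K.N L.N (MonoidHom.id Γ) (by simpa using h) (x K) = x L}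
  one_mem' := by intro K L h; simp
  mul_mem' := by
    intro a b ha hb K L h
    simp only [Pi.mul_apply, map_mul, ha K L h, hb K L h]
  inv_mem' := by
    intro a ha K L h
    simp only [Pi.inv_apply, map_inv, ha K L h]

/-- The profinite completion, as a topological group. -/
abbrev ProfiniteCompletion := ↥(profiniteCompletionSubgroup Γ)

/-- The canonical map `ι : Γ → Γ̂`. -/
def toProfiniteCompletion : Γ →* ProfiniteCompletion Γ where
  toFun g := ⟨fun K => QuotientGroup.mk g, fun K L h => rfl⟩
  map_one' := rfl
  map_mul' _ _ := rfl

/-- A group is residually finite if every nontrivial element survives in some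
finite quotient. -/
def ResiduallyFinite : Prop :=
  ∀ g : Γ, g ≠ 1 → ∃ (Q : Type) (_ : Group Q) (_ : Finite Q) (φ : Γ →* Q), φ g ≠ 1


/-- Surjective homomorphisms map the lower central series onto the lower central series. -/
lemma lcs_map_eq_of_surjective {G H : Type*} [Group G] [Group H] (f : G →* H)
    (hf : Function.Surjective f) (n : ℕ) :
    ((⊤ : Subgroup G).lowerCentralSeries n).map f = (⊤ : Subgroup H).lowerCentralSeries n := by
  induction n with
  | zero => simpa using Subgroup.map_top_of_surjective f hf
  | succ n ih =>
      show Subgroup.map f ⁅(⊤ : Subgroup G).lowerCentralSeries n, ⊤⁆ = ⁅(⊤ : Subgroup H).lowerCentralSeries n, ⊤⁆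
      rw [Subgroup.map_commutator, ih, Subgroup.map_top_of_surjective f hf]

/-- The canonical map to the profinite completion is injective for residually finite groups. -/
lemma toProfiniteCompletion_injective {Γ : Type*} [Group Γ] (h : ResiduallyFinite Γ) :
    Function.Injective (toProfiniteCompletion Γ) := by
  refine (injective_iff_map_eq_one _).mpr fun g hg => ?_
  by_contra hne
  obtain ⟨Q, _, _, φ, hφ⟩ := h g hne
  have : Finite (Γ ⧸ φ.ker) := Finite.of_injective _ (QuotientGroup.kerLift_injective φ)
  let K : FinIndexNormal Γ := ⟨φ.ker, inferInstance, Subgroup.finiteIndex_of_finite_quotient⟩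
  have hK : (toProfiniteCompletion Γ g).1 K = 1 := by rw [hg]; rfl
  have : g ∈ φ.ker := (QuotientGroup.eq_one_iff g).mp hK
  exact hφ this

/-- If `Γ` has nilpotency class at most `c`, so does its profinite completion. -/
lemma lcs_profiniteCompletion_eq_bot {Γ : Type*} [Group Γ] {c : ℕ}
    (h : (⊤ : Subgroup Γ).lowerCentralSeries c = ⊥) :
    (⊤ : Subgroup (ProfiniteCompletion Γ)).lowerCentralSeries c = ⊥ := by
  rw [eq_bot_iff]
  intro x hx
  have hcomp : ∀ K : FinIndexNormal Γ, x.1 K = 1 := by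
    intro K
    let π : ProfiniteCompletion Γ →* Γ ⧸ K.N :=
      (Pi.evalMonoidHom (fun K : FinIndexNormal Γ => Γ ⧸ K.N) K).comp
        (profiniteCompletionSubgroup Γ).subtype
    have h1 : π x ∈ (⊤ : Subgroup (Γ ⧸ K.N)).lowerCentralSeries c :=
      Subgroup.lowerCentralSeries.map π c ⟨x, hx, rfl⟩
    have h2 : (⊤ : Subgroup (Γ ⧸ K.N)).lowerCentralSeries c = ⊥ := by
      rw [← lcs_map_eq_of_surjective (QuotientGroup.mk' K.N)
        (QuotientGroup.mk'_surjective K.N), h, Subgroup.map_bot]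
    rw [h2] at h1
    exact h1
  have : x = 1 := by
    ext K
    exact hcomp K
  simp [this]

/-- Nilpotency class ≤ c transfers to subgroups (via injective maps into nilpotent groups). -/
lemma lcs_eq_bot_of_injective {G H : Type*} [Group G] [Group H] (f : G →* H)
    (hf : Function.Injective f) {c : ℕ} (h : (⊤ : Subgroup H).lowerCentralSeries c = ⊥) :
    (⊤ : Subgroup G).lowerCentralSeries c = ⊥ := by
  rw [eq_bot_iff]
  intro x hx
  have : f x ∈ (⊤ : Subgroup H).lowerCentralSeries c := Subgroup.lowerCentralSeries.map f c ⟨x, hx, rfl⟩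
  rw [h, Subgroup.mem_bot] at this
  simpa using hf (this.trans (map_one f).symm)

lemma lcs_eq_bot_of_mulEquiv {G H : Type*} [Group G] [Group H] (e : G ≃* H) {c : ℕ}
    (h : (⊤ : Subgroup G).lowerCentralSeries c = ⊥) : (⊤ : Subgroup H).lowerCentralSeries c = ⊥ :=
  lcs_eq_bot_of_injective e.symm.toMonoidHom e.symm.injective h

theorem nilpotent_class_le_is_profinite_property (Γ₁ Γ₂ : Type*) [Group Γ₁] [Group Γ₂]
    (h₁ : ResiduallyFinite Γ₁) (h₂ : ResiduallyFinite Γ₂) (c : ℕ)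
    (e : ProfiniteCompletion Γ₁ ≃* ProfiniteCompletion Γ₂)
    (he : Continuous e) (he' : Continuous e.symm) :
    (⊤ : Subgroup Γ₁).lowerCentralSeries c = ⊥ ↔ (⊤ : Subgroup Γ₂).lowerCentralSeries c = ⊥ := by
  constructor
  · intro h
    exact lcs_eq_bot_of_injective _ (toProfiniteCompletion_injective h₂)
      (lcs_eq_bot_of_mulEquiv e (lcs_profiniteCompletion_eq_bot h))
  · intro h
    exact lcs_eq_bot_of_injective _ (toProfiniteCompletion_injective h₁)
      (lcs_eq_bot_of_mulEquiv e.symm (lcs_profiniteCompletion_eq_bot h))
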